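/- Let A be a commutative ring and L a unit of A. For all integers p ∈ ℤ, q ≥ 0 and r ≥ 1 with q ≤ r, the power series T^q · (T^r − L^p)^{−1} belongs to the A-subalgebra 𝓡 of A[[T]] generated by the elements T^b · (T^b − L^a)^{−1}, a ∈ ℤ, b ≥ 1. -/

import Mathlib

open PowerSeries

/-- The `A`-subalgebra 𝓡 of `A⟦T⟧` generated by the elements `T^b * (T^b - L^a)⁻¹`
for `a ∈ ℤ`, `b ≥ 1` (the inverse being taken in `A⟦T⟧`, where `T^b - L^a` is a unit
since its constant coefficient `-L^a` is a unit of `A`). -/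
noncomputable def RatAlg (A : Type*) [CommRing A] (L : Aˣ) : Subalgebra A (PowerSeries A) :=
  Algebra.adjoin A
    {x : PowerSeries A | ∃ (a : ℤ) (b : ℕ), 1 ≤ b ∧
      x = (PowerSeries.X : PowerSeries A) ^ b *
        Ring.inverse ((PowerSeries.X : PowerSeries A) ^ b -
          PowerSeries.C (R := A) ((L ^ a : Aˣ) : A))}

namespace RatAlgAux

variable {A : Type*} [CommRing A] (L : Aˣ)

/-- `T^b - L^a` is a unit of `A⟦T⟧`. -/
lemma isUnit_aux (a : ℤ) (b : ℕ) (hb : 1 ≤ b) :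
    IsUnit ((PowerSeries.X : PowerSeries A) ^ b - PowerSeries.C (R := A) ((L ^ a : Aˣ) : A)) := by
  rw [PowerSeries.isUnit_iff_constantCoeff, map_sub, map_pow, PowerSeries.constantCoeff_X,
    PowerSeries.constantCoeff_C, zero_pow (by omega : b ≠ 0), zero_sub]
  exact (L ^ a).isUnit.neg

lemma C_mem (v : A) : PowerSeries.C (R := A) v ∈ RatAlg A L := by
  have h := Subalgebra.algebraMap_mem (RatAlg A L) v
  rwa [PowerSeries.algebraMap_apply, Algebra.algebraMap_self, RingHom.id_apply] at h

/-- The inverse of `T^b - L^a` lies in 𝓡. -/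
lemma inverse_mem (a : ℤ) (b : ℕ) (hb : 1 ≤ b) :
    Ring.inverse ((PowerSeries.X : PowerSeries A) ^ b - PowerSeries.C (R := A) ((L ^ a : Aˣ) : A))
      ∈ RatAlg A L := by
  set f : PowerSeries A := (PowerSeries.X : PowerSeries A) ^ b
    - PowerSeries.C (R := A) ((L ^ a : Aˣ) : A) with hf
  set h : PowerSeries A := Ring.inverse f with hh
  have hu : IsUnit f := isUnit_aux L a b hb
  have hfh : f * h = 1 := Ring.mul_inverse_cancel f hu
  have hg : (PowerSeries.X : PowerSeries A) ^ b * h ∈ RatAlg A L :=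
    Algebra.subset_adjoin ⟨a, b, hb, rfl⟩
  have e1 : (PowerSeries.X : PowerSeries A) ^ b * h - 1
      = PowerSeries.C (R := A) ((L ^ a : Aˣ) : A) * h := by
    have eX : (PowerSeries.X : PowerSeries A) ^ b
        = f + PowerSeries.C (R := A) ((L ^ a : Aˣ) : A) := by rw [hf]; ring
    rw [eX, add_mul, hfh]; ring
  have e2 : h = PowerSeries.C (R := A) ((L ^ (-a) : Aˣ) : A)
      * ((PowerSeries.X : PowerSeries A) ^ b * h - 1) := by
    rw [e1, ← mul_assoc, ← map_mul, ← Units.val_mul, ← zpow_add L, neg_add_cancel,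
      zpow_zero, Units.val_one, map_one, one_mul]
  rw [e2]
  exact mul_mem (C_mem L _) (sub_mem hg (one_mem _))

/-- Iterated divided differences of `X^r - C c` at `1`. -/
noncomputable def ddPhi (c : A) (r : ℕ) : ℕ → Polynomial A
  | 0 => Polynomial.X ^ r - Polynomial.C c
  | j + 1 => ddPhi c r j /ₘ (Polynomial.X - Polynomial.C 1)

lemma ddPhi_step (c : A) (r j : ℕ) :
    ddPhi c r j = Polynomial.C ((ddPhi c r j).eval 1)
      + (Polynomial.X - Polynomial.C 1) * ddPhi c r (j + 1) := by
  conv_lhs => rw [← (ddPhi c r j).modByMonic_add_div (Polynomial.X - Polynomial.C 1)]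
  rw [Polynomial.modByMonic_X_sub_C_eq_C_eval]
  rfl

lemma ddPhi_deg [Nontrivial A] (c : A) (r : ℕ) (hr : 1 ≤ r) :
    ∀ j, j ≤ r → (ddPhi c r j).Monic ∧ (ddPhi c r j).natDegree = r - j := by
  intro j
  induction j with
  | zero =>
    intro _
    exact ⟨Polynomial.monic_X_pow_sub_C c (by omega), Polynomial.natDegree_X_pow_sub_C⟩
  | succ j ih =>
    intro hj
    obtain ⟨hm, hd⟩ := ih (by omega)
    have hdeg : (ddPhi c r (j + 1)).natDegree = r - (j + 1) := by
      show ((ddPhi c r j) /ₘ (Polynomial.X - Polynomial.C 1)).natDegree = r - (j + 1)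
      rw [Polynomial.natDegree_divByMonic _ (Polynomial.monic_X_sub_C (1 : A)),
        Polynomial.natDegree_X_sub_C, hd]
      omega
    refine ⟨?_, hdeg⟩
    show (ddPhi c r (j + 1)).leadingCoeff = 1
    rw [Polynomial.leadingCoeff, hdeg]
    show ((ddPhi c r j) /ₘ (Polynomial.X - Polynomial.C 1)).coeff (r - (j + 1)) = 1
    rw [Polynomial.coeff_divByMonic_X_sub_C, hd]
    have : r - (j + 1) + 1 = r - j := by omega
    rw [this, Finset.Icc_self, Finset.sum_singleton, Nat.sub_self, pow_zero, one_mul]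
    have := hm
    rwa [Polynomial.Monic, Polynomial.leadingCoeff, hd] at this

end RatAlgAux

open RatAlgAux in
/-- for `p ∈ ℤ`, `0 ≤ q ≤ r`, `r ≥ 1`, the power series
`T^q * (T^r - L^p)⁻¹` belongs to 𝓡. -/
theorem stmt3 {A : Type*} [CommRing A] (L : Aˣ) (p : ℤ) (q r : ℕ)
    (hr : 1 ≤ r) (hqr : q ≤ r) :
    (PowerSeries.X : PowerSeries A) ^ q *
      Ring.inverse ((PowerSeries.X : PowerSeries A) ^ r -
        PowerSeries.C (R := A) ((L ^ p : Aˣ) : A)) ∈ RatAlg A L := by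
  rcases subsingleton_or_nontrivial A with hA | hA
  · have : Subsingleton (PowerSeries A) := by
      constructor; intro x y; ext n; exact Subsingleton.elim _ _
    rw [Subsingleton.elim ((PowerSeries.X : PowerSeries A) ^ q * _) (0 : PowerSeries A)]
    exact zero_mem _
  rcases eq_or_lt_of_le hqr with rfl | hlt
  · exact Algebra.subset_adjoin ⟨p, q, hr, rfl⟩
  -- main case q < r
  set c : A := ((L ^ p : Aˣ) : A) with hc
  set D₂ : PowerSeries A := (PowerSeries.X : PowerSeries A) ^ r - PowerSeries.C (R := A) c with hD₂
  set h₂ : PowerSeries A := Ring.inverse D₂ with hh₂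
  set D₁ : PowerSeries A := (PowerSeries.X : PowerSeries A) - 1 with hD₁
  have hD₁eq : D₁ = (PowerSeries.X : PowerSeries A) ^ 1
      - PowerSeries.C (R := A) ((L ^ (0 : ℤ) : Aˣ) : A) := by
    simp [hD₁]
  set h₁ : PowerSeries A := Ring.inverse D₁ with hh₁
  have hu₁ : IsUnit D₁ := by rw [hD₁eq]; exact isUnit_aux L 0 1 le_rfl
  have hu₂ : IsUnit D₂ := isUnit_aux L p r hr
  have h₁mem : h₁ ∈ RatAlg A L := by
    rw [hh₁, hD₁eq]; exact inverse_mem L 0 1 le_rfl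
  have h₂mem : h₂ ∈ RatAlg A L := inverse_mem L p r hr
  set E : PowerSeries A := h₁ * h₂ with hE
  have hEmem : E ∈ RatAlg A L := mul_mem h₁mem h₂mem
  have hD₁h₁ : D₁ * h₁ = 1 := Ring.mul_inverse_cancel D₁ hu₁
  have hD₂h₂ : D₂ * h₂ = 1 := Ring.mul_inverse_cancel D₂ hu₂
  -- coe of ddPhi 0
  have hcoe0 : ((ddPhi c r 0 : Polynomial A) : PowerSeries A) = D₂ := by
    show ((Polynomial.X ^ r - Polynomial.C c : Polynomial A) : PowerSeries A) = D₂
    push_cast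
    rw [hD₂]
  -- membership of Phi_j * E
  have hM : ∀ j : ℕ, ((ddPhi c r j : Polynomial A) : PowerSeries A) * E ∈ RatAlg A L := by
    intro j
    induction j with
    | zero =>
      rw [hcoe0]
      have : D₂ * E = h₁ := by rw [hE, mul_comm h₁ h₂, ← mul_assoc, hD₂h₂, one_mul]
      rw [this]; exact h₁mem
    | succ j ih =>
      have hid := ddPhi_step c r j
      have hidc : ((ddPhi c r j : Polynomial A) : PowerSeries A)
          = PowerSeries.C (R := A) ((ddPhi c r j).eval 1)
            + D₁ * ((ddPhi c r (j + 1) : Polynomial A) : PowerSeries A) := by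
        conv_lhs => rw [hid]
        push_cast
        rw [hD₁, map_one]
        try ring
      have key : ((ddPhi c r (j + 1) : Polynomial A) : PowerSeries A) * E
          = h₁ * (((ddPhi c r j : Polynomial A) : PowerSeries A) * E)
            - PowerSeries.C (R := A) ((ddPhi c r j).eval 1) * (h₁ * E) := by
        rw [hidc]
        have : D₁ * h₁ = 1 := hD₁h₁
        calc ((ddPhi c r (j + 1) : Polynomial A) : PowerSeries A) * E
            = (D₁ * h₁) * (((ddPhi c r (j + 1) : Polynomial A) : PowerSeries A) * E) := by
              rw [this, one_mul]
          _ = h₁ * ((PowerSeries.C (R := A) ((ddPhi c r j).eval 1)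
                + D₁ * ((ddPhi c r (j + 1) : Polynomial A) : PowerSeries A)) * E)
              - PowerSeries.C (R := A) ((ddPhi c r j).eval 1) * (h₁ * E) := by ring
      rw [key]
      exact sub_mem (mul_mem h₁mem ih) (mul_mem (C_mem L _) (mul_mem h₁mem hEmem))
  -- extraction: X^i * E ∈ R for i ≤ r
  have key : ∀ i : ℕ, i ≤ r → (PowerSeries.X : PowerSeries A) ^ i * E ∈ RatAlg A L := by
    intro i
    induction i using Nat.strong_induction_on with
    | _ i ih =>
      intro hir
      obtain ⟨hPm, hPd⟩ := ddPhi_deg c r hr (r - i) (by omega)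
      have hPd' : (ddPhi c r (r - i)).natDegree = i := by omega
      set P : Polynomial A := ddPhi c r (r - i) with hP
      set Q : Polynomial A := P - Polynomial.X ^ i with hQ
      have hQcoeff : ∀ k, i ≤ k → Q.coeff k = 0 := by
        intro k hk
        rw [hQ, Polynomial.coeff_sub, Polynomial.coeff_X_pow]
        rcases eq_or_lt_of_le hk with heq | hk'
        · rw [if_pos heq.symm]
          have hPk : P.coeff k = 1 := by
            rw [← heq]
            have := hPm
            rwa [Polynomial.Monic, Polynomial.leadingCoeff, hPd'] at this
          rw [hPk]; ring
        · rw [if_neg (by omega : ¬ k = i)]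
          have hPk : P.coeff k = 0 :=
            Polynomial.coeff_eq_zero_of_natDegree_lt (by omega)
          rw [hPk]; ring
      have hsupport : ∀ k ∈ Q.support, k < i := by
        intro k hk
        by_contra hcon
        exact (Polynomial.mem_support_iff.mp hk) (hQcoeff k (by omega))
      have hQmem : ((Q : Polynomial A) : PowerSeries A) * E ∈ RatAlg A L := by
        have hQsum : ((Q : Polynomial A) : PowerSeries A)
            = ∑ k ∈ Q.support, PowerSeries.C (R := A) (Q.coeff k) * (PowerSeries.X : PowerSeries A) ^ k := by
          conv_lhs => rw [Q.as_sum_support]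
          rw [← Polynomial.coeToPowerSeries.ringHom_apply, map_sum]
          refine Finset.sum_congr rfl fun k _ => ?_
          rw [← Polynomial.C_mul_X_pow_eq_monomial]
          simp only [map_mul, map_pow, Polynomial.coeToPowerSeries.ringHom_apply,
            Polynomial.coe_C, Polynomial.coe_X]
          try ring
        rw [hQsum, Finset.sum_mul]
        refine sum_mem fun k hk => ?_
        have hki : k < i := hsupport k hk
        rw [mul_assoc]
        exact mul_mem (C_mem L _) (ih k hki (by omega))
      have hsplit : (PowerSeries.X : PowerSeries A) ^ i * E
          = ((P : Polynomial A) : PowerSeries A) * E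
            - ((Q : Polynomial A) : PowerSeries A) * E := by
        rw [hQ]
        push_cast
        ring
      rw [hsplit]
      exact sub_mem (hM (r - i)) hQmem
  -- conclude
  have hfinal : (PowerSeries.X : PowerSeries A) ^ q * h₂
      = (PowerSeries.X : PowerSeries A) ^ (q + 1) * E
        - (PowerSeries.X : PowerSeries A) ^ q * E := by
    have : (PowerSeries.X : PowerSeries A) ^ (q + 1) * E
        - (PowerSeries.X : PowerSeries A) ^ q * E
        = (PowerSeries.X : PowerSeries A) ^ q * (D₁ * h₁) * h₂ := by
      rw [hD₁, hE]; ring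
    rw [this, hD₁h₁, mul_one]
  show (PowerSeries.X : PowerSeries A) ^ q * h₂ ∈ RatAlg A L
  rw [hfinal]
  exact sub_mem (key (q + 1) (by omega)) (key q (by omega))
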